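/- Effective spectral gap lemma: Let Π_A and Π_B be orthogonal projectors on a finite-dimensional Hilbert space, R_A = 2Π_A − I and R_B = 2Π_B − I the corresponding reflections, and for ε > 0 let P_ε denote the orthogonal projector onto the span of eigenvectors of R_B R_A with eigenvalues e^{2iθ} satisfying |θ| ≤ ε. If Π_A |ξ⟩ = 0, then ‖P_ε Π_B |ξ⟩‖ ≤ ε‖|ξ⟩‖. -/

import Mathlib

open Complex

set_option maxHeartbeats 1000000 in
/-- Effective spectral gap lemma (Lee et al.): if `PA ξ = 0`, then the projection of
`PB ξ` onto the span of eigenvectors of `R_B R_A` with eigenphase at most `ε` has norm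
at most `ε ‖ξ‖`. -/
theorem effective_spectral_gap {n : ℕ}
    (PA PB Pε : EuclideanSpace ℂ (Fin n) →ₗ[ℂ] EuclideanSpace ℂ (Fin n))
    (hAidem : PA ∘ₗ PA = PA)
    (hAsym : ∀ x y, (inner ℂ (PA x) y : ℂ) = inner ℂ x (PA y))
    (hBidem : PB ∘ₗ PB = PB)
    (hBsym : ∀ x y, (inner ℂ (PB x) y : ℂ) = inner ℂ x (PB y))
    (RA RB : EuclideanSpace ℂ (Fin n) →ₗ[ℂ] EuclideanSpace ℂ (Fin n))
    (hRA : RA = 2 • PA - LinearMap.id)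
    (hRB : RB = 2 • PB - LinearMap.id)
    (ε : ℝ) (hε : 0 < ε)
    (hPidem : Pε ∘ₗ Pε = Pε)
    (hPsym : ∀ x y, (inner ℂ (Pε x) y : ℂ) = inner ℂ x (Pε y))
    (hPrange : LinearMap.range Pε =
      Submodule.span ℂ {ψ | ∃ θ : ℝ, |θ| ≤ ε ∧
        (RB ∘ₗ RA) ψ = Complex.exp (2 * θ * Complex.I) • ψ})
    (ξ : EuclideanSpace ℂ (Fin n)) (hξ : PA ξ = 0) :
    ‖Pε (PB ξ)‖ ≤ ε * ‖ξ‖ := by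
  classical
  have hPA2 : ∀ x, PA (PA x) = PA x := fun x => LinearMap.ext_iff.mp hAidem x
  have hPB2 : ∀ x, PB (PB x) = PB x := fun x => LinearMap.ext_iff.mp hBidem x
  have hPe2 : ∀ x, Pε (Pε x) = Pε x := fun x => LinearMap.ext_iff.mp hPidem x
  have hRAx : ∀ x, RA x = PA x + PA x - x := by
    intro x; rw [hRA]; simp [two_smul]
  have hRBx : ∀ x, RB x = PB x + PB x - x := by
    intro x; rw [hRB]; simp [two_smul]
  have hRA2 : ∀ x, RA (RA x) = x := by
    intro x
    rw [hRAx (RA x), hRAx x]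
    simp only [map_sub, map_add, hPA2]
    abel
  have hRB2 : ∀ x, RB (RB x) = x := by
    intro x
    rw [hRBx (RB x), hRBx x]
    simp only [map_sub, map_add, hPB2]
    abel
  have hRAsym : ∀ x y, (inner ℂ (RA x) y : ℂ) = inner ℂ x (RA y) := by
    intro x y
    rw [hRAx, hRAx]
    simp only [inner_sub_left, inner_add_left, inner_sub_right, inner_add_right, hAsym]
  have hRBsym : ∀ x y, (inner ℂ (RB x) y : ℂ) = inner ℂ x (RB y) := by
    intro x y
    rw [hRBx, hRBx]
    simp only [inner_sub_left, inner_add_left, inner_sub_right, inner_add_right, hBsym]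
  have hUVsym : ∀ x y, (inner ℂ (RA (RB x)) y : ℂ) = inner ℂ x (RB (RA y)) := by
    intro x y; rw [hRAsym, hRBsym]
  have hVUsym : ∀ x y, (inner ℂ (RB (RA x)) y : ℂ) = inner ℂ x (RA (RB y)) := by
    intro x y; rw [hRBsym, hRAsym]
  -- The symmetric operator A = (V - 1)(U - 1), where U = RB RA, V = RA RB.
  set A : EuclideanSpace ℂ (Fin n) →ₗ[ℂ] EuclideanSpace ℂ (Fin n) :=
    (RA ∘ₗ RB - LinearMap.id) ∘ₗ (RB ∘ₗ RA - LinearMap.id) with hAdef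
  have hAapp : ∀ x, A x = x + x - RA (RB x) - RB (RA x) := by
    intro x
    simp only [hAdef, LinearMap.comp_apply, LinearMap.sub_apply, LinearMap.id_apply, map_sub]
    rw [hRB2, hRA2]
    abel
  have hAsymm : A.IsSymmetric := by
    intro x y
    rw [hAapp, hAapp]
    simp only [inner_sub_left, inner_add_left, inner_sub_right, inner_add_right,
      hUVsym, hVUsym]
    ring
  -- quadratic form identity
  have hquad : ∀ x, (inner ℂ x (A x) : ℂ) = inner ℂ (x - RA (RB x)) (x - RA (RB x)) := by
    intro x
    rw [hAapp]
    simp only [inner_sub_left, inner_add_left, inner_sub_right, inner_add_right]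
    have h1 : (inner ℂ (RA (RB x)) (RA (RB x)) : ℂ) = inner ℂ x x := by
      rw [hUVsym, hRA2, hRB2]
    have h2 : (inner ℂ (RA (RB x)) x : ℂ) = inner ℂ x (RB (RA x)) := hUVsym x x
    rw [h1, h2]
    ring
  have hself : ∀ x : EuclideanSpace ℂ (Fin n), Complex.re (inner ℂ x x : ℂ) = ‖x‖ ^ 2 :=
    fun x => by simpa using inner_self_eq_norm_sq (𝕜 := ℂ) x
  -- spectral data
  have hn : Module.finrank ℂ (EuclideanSpace ℂ (Fin n)) = n := finrank_euclideanSpace_fin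
  obtain ⟨b, μ, hb⟩ : ∃ (b : OrthonormalBasis (Fin n) ℂ (EuclideanSpace ℂ (Fin n)))
      (μ : Fin n → ℝ), ∀ i, A (b i) = (μ i : ℂ) • b i :=
    ⟨hAsymm.eigenvectorBasis hn, hAsymm.eigenvalues hn,
      fun i => hAsymm.apply_eigenvectorBasis hn i⟩
  clear_value A
  -- the vector of interest
  set v := Pε (PB ξ) with hvdef
  have hvmem : v ∈ Submodule.span ℂ {ψ | ∃ θ : ℝ, |θ| ≤ ε ∧
      (RB ∘ₗ RA) ψ = Complex.exp (2 * θ * Complex.I) • ψ} := by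
    rw [← hPrange]; exact ⟨PB ξ, rfl⟩
  -- coefficients on eigenvectors with large eigenvalue vanish
  have hzero : ∀ i, 4 * ε ^ 2 < μ i → (inner ℂ (b i) v : ℂ) = 0 := by
    intro i hi
    refine Submodule.span_induction ?_ ?_ ?_ ?_ hvmem
    · rintro ψ ⟨θ, hθ, heig⟩
      have heig' : RB (RA ψ) = Complex.exp (2 * θ * Complex.I) • ψ := heig
      have hne : Complex.exp (2 * θ * Complex.I) ≠ 0 := Complex.exp_ne_zero _
      have h1 : ψ = Complex.exp (2 * θ * Complex.I) • RA (RB ψ) := by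
        have h := congrArg (fun z => RA (RB z)) heig'
        simpa [hRB2, hRA2, map_smul] using h
      have hVψ : RA (RB ψ) = (Complex.exp (2 * θ * Complex.I))⁻¹ • ψ := by
        rw [eq_comm, inv_smul_eq_iff₀ hne]; exact h1
      have hscal : (((2 : ℝ) - 2 * Real.cos (2 * θ) : ℝ) : ℂ)
          = 2 - Complex.exp (2 * θ * Complex.I) - (Complex.exp (2 * θ * Complex.I))⁻¹ := by
        have e1 : (2 : ℂ) * θ * Complex.I = ((2 * θ : ℝ) : ℂ) * Complex.I := by
          push_cast; ring
        have e2 : -(((2 * θ : ℝ) : ℂ) * Complex.I) = ((-(2 * θ) : ℝ) : ℂ) * Complex.I := by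
          push_cast; ring
        rw [e1, ← Complex.exp_neg, e2, Complex.exp_mul_I, Complex.exp_mul_I,
          ← Complex.ofReal_cos, ← Complex.ofReal_sin,
          ← Complex.ofReal_cos, ← Complex.ofReal_sin,
          Real.cos_neg, Real.sin_neg]
        push_cast
        ring
      have hAψ : A ψ = (((2 : ℝ) - 2 * Real.cos (2 * θ) : ℝ) : ℂ) • ψ := by
        rw [hAapp, hVψ, heig', hscal, sub_smul, sub_smul, two_smul]
        abel
      have h3 := hAsymm (b i) ψ
      rw [hb i, hAψ, inner_smul_left, inner_smul_right, Complex.conj_ofReal] at h3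
      have hle : (2 : ℝ) - 2 * Real.cos (2 * θ) ≤ 4 * ε ^ 2 := by
        have hs : Real.sin θ ^ 2 ≤ θ ^ 2 := Real.sin_sq_le_sq
        have hc := Real.cos_two_mul' θ
        have hpy := Real.sin_sq_add_cos_sq θ
        have hθ2 : θ ^ 2 ≤ ε ^ 2 := by
          have := abs_le.mp hθ
          nlinarith
        nlinarith
      have hneq : ((μ i : ℝ) : ℂ) ≠ (((2 : ℝ) - 2 * Real.cos (2 * θ) : ℝ) : ℂ) := by
        have : (μ i : ℝ) ≠ (2 : ℝ) - 2 * Real.cos (2 * θ) := by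
          intro h; rw [← h] at hle; linarith
        exact_mod_cast this
      have h4 : (((μ i : ℝ) : ℂ) - (((2 : ℝ) - 2 * Real.cos (2 * θ) : ℝ) : ℂ))
          * (inner ℂ (b i) ψ : ℂ) = 0 := by
        rw [sub_mul, h3]; ring
      rcases mul_eq_zero.mp h4 with h | h
      · exact absurd (sub_eq_zero.mp h) hneq
      · exact h
    · exact inner_zero_right _
    · intro x y _ _ h1 h2
      rw [inner_add_right, h1, h2, add_zero]
    · intro a x _ h1
      rw [inner_smul_right, h1, mul_zero]
  -- expansion of the quadratic form
  have expand : (inner ℂ v (A v) : ℂ)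
      = ∑ i, ((μ i : ℝ) : ℂ) * ((‖(inner ℂ (b i) v : ℂ)‖ ^ 2 : ℝ) : ℂ) := by
    rw [← b.sum_inner_mul_inner v (A v)]
    refine Finset.sum_congr rfl fun i _ => ?_
    have hterm : (inner ℂ (b i) (A v) : ℂ) = ((μ i : ℝ) : ℂ) * inner ℂ (b i) v := by
      rw [← hAsymm (b i) v, hb i, inner_smul_left, Complex.conj_ofReal]
    have hconj : (inner ℂ v (b i) : ℂ) = (starRingEnd ℂ) (inner ℂ (b i) v) :=
      (inner_conj_symm v (b i)).symm
    have hC : (starRingEnd ℂ) (inner ℂ (b i) v : ℂ) * (inner ℂ (b i) v : ℂ)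
        = ((‖(inner ℂ (b i) v : ℂ)‖ ^ 2 : ℝ) : ℂ) := by
      rw [Complex.conj_mul']; norm_cast
    rw [hterm, hconj]
    linear_combination ((μ i : ℝ) : ℂ) * hC
  have hsumnorm : ∑ i, ‖(inner ℂ (b i) v : ℂ)‖ ^ 2 = ‖v‖ ^ 2 := by
    have h := b.sum_inner_mul_inner v v
    have h2 : ∀ i, (inner ℂ v (b i) : ℂ) * (inner ℂ (b i) v : ℂ)
        = ((‖(inner ℂ (b i) v : ℂ)‖ ^ 2 : ℝ) : ℂ) := by
      intro i
      have hconj : (inner ℂ v (b i) : ℂ) = (starRingEnd ℂ) (inner ℂ (b i) v) :=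
        (inner_conj_symm v (b i)).symm
      rw [hconj, Complex.conj_mul']; norm_cast
    rw [Finset.sum_congr rfl fun i _ => h2 i] at h
    have h3 := congrArg Complex.re h
    rw [Complex.re_sum, hself v] at h3
    simp only [Complex.ofReal_re] at h3
    exact h3
  -- the key quadratic bound
  have hbound : Complex.re (inner ℂ v (A v) : ℂ) ≤ 4 * ε ^ 2 * ‖v‖ ^ 2 := by
    rw [expand]
    have : Complex.re (∑ i, ((μ i : ℝ) : ℂ) * ((‖(inner ℂ (b i) v : ℂ)‖ ^ 2 : ℝ) : ℂ))
        = ∑ i, μ i * ‖(inner ℂ (b i) v : ℂ)‖ ^ 2 := by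
      rw [Complex.re_sum]
      refine Finset.sum_congr rfl fun i _ => ?_
      rw [← Complex.ofReal_mul, Complex.ofReal_re]
    rw [this, ← hsumnorm, Finset.mul_sum]
    refine Finset.sum_le_sum fun i _ => ?_
    by_cases hci : (inner ℂ (b i) v : ℂ) = 0
    · simp [hci]
    · have : μ i ≤ 4 * ε ^ 2 := by
        by_contra h
        exact hci (hzero i (lt_of_not_ge h))
      have hn0 : (0 : ℝ) ≤ ‖(inner ℂ (b i) v : ℂ)‖ ^ 2 := sq_nonneg _
      exact mul_le_mul_of_nonneg_right this hn0
  -- hence ‖v - V v‖ ≤ 2 ε ‖v‖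
  have hw : ‖v - RA (RB v)‖ ≤ 2 * ε * ‖v‖ := by
    have hq := hquad v
    have hre : (‖v - RA (RB v)‖ : ℝ) ^ 2 = Complex.re (inner ℂ v (A v) : ℂ) := by
      rw [hq]
      exact (hself _).symm
    have h1 : ‖v - RA (RB v)‖ ^ 2 ≤ (2 * ε * ‖v‖) ^ 2 := by
      rw [hre]
      calc Complex.re (inner ℂ v (A v) : ℂ) ≤ 4 * ε ^ 2 * ‖v‖ ^ 2 := hbound
        _ = (2 * ε * ‖v‖) ^ 2 := by ring
    have h0 : (0 : ℝ) ≤ 2 * ε * ‖v‖ := by positivity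
    exact le_of_pow_le_pow_left₀ two_ne_zero h0 h1
  -- the inner ℂ product identity ⟪v,v⟫ = ½ ⟪ξ, v - V v⟫
  have hRAξ : RA ξ = -ξ := by
    rw [hRAx, hξ]; simp
  have hPBsum : PB ξ + PB ξ = ξ - RB (RA ξ) := by
    rw [hRAξ, map_neg, hRBx]
    abel
  have hvv : (inner ℂ v v : ℂ) * 2 = inner ℂ ξ (v - RA (RB v)) := by
    have e1 : (inner ℂ v v : ℂ) = inner ℂ (PB ξ) v := by
      rw [hvdef, hPsym, hPe2]
    have e2 : (inner ℂ (PB ξ) v : ℂ) * 2 = inner ℂ (ξ - RB (RA ξ)) v := by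
      rw [← hPBsum, inner_add_left]
      ring
    rw [e1, e2, inner_sub_left, hVUsym, ← inner_sub_right]
  -- final estimate
  have hfinal : ‖v‖ ^ 2 * 2 ≤ ‖ξ‖ * (2 * ε * ‖v‖) := by
    have h1 : (‖v‖ ^ 2 : ℝ) * 2 = Complex.re ((inner ℂ ξ (v - RA (RB v)) : ℂ)) := by
      rw [← hvv, mul_two (inner ℂ v v : ℂ), Complex.add_re, hself v]
      ring
    rw [h1]
    calc Complex.re ((inner ℂ ξ (v - RA (RB v)) : ℂ))
        ≤ ‖(inner ℂ ξ (v - RA (RB v)) : ℂ)‖ := by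
          exact Complex.re_le_norm _
      _ ≤ ‖ξ‖ * ‖v - RA (RB v)‖ := norm_inner_le_norm _ _
      _ ≤ ‖ξ‖ * (2 * ε * ‖v‖) := by
          exact mul_le_mul_of_nonneg_left hw (norm_nonneg _)
  rcases eq_or_lt_of_le (norm_nonneg v) with h0 | h0
  · rw [hvdef] at h0
    rw [← h0]
    positivity
  · nlinarith [hfinal, h0]
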